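/- Assume a trading system with trade results t_1, …, t_N ∈ ℝ \ {0}, at least one of which is negative, maximal loss t̂ := max{|t_i| : t_i < 0} > 0, multiplicities N_i ∈ ℕ with N_i ≥ 1, and positive expectation Σ_{i=1}^N (N_i/N̂)·t_i > 0 where N̂ := Σ_{i=1}^N N_i. Then the terminal wealth relative TWR(f) := Π_{i=1}^N (1 + f·t_i/t̂)^{N_i}, f ∈ [0,1], attains its maximum over [0,1] at exactly one point f^opt, and f^opt ∈ (0,1). -/

import Mathlib

/-- Vince's optimal f model with multiplicities: the terminal wealth relative
`TWR(f) = ∏ (1 + f·tᵢ/t̂)^{Nᵢ}` attains its maximum over `[0,1]` at exactly one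
point `f^opt`, which lies in `(0,1)`. -/
theorem stmt_1 (N : ℕ) (hN : 1 ≤ N) (t : Fin N → ℝ) (ht : ∀ i, t i ≠ 0)
    (hneg : ∃ i, t i < 0) (that : ℝ)
    (hthat : IsGreatest {x : ℝ | ∃ i, t i < 0 ∧ x = |t i|} that)
    (hthat_pos : 0 < that)
    (Nmul : Fin N → ℕ) (hNmul : ∀ i, 1 ≤ Nmul i)
    (Nhat : ℕ) (hNhat : Nhat = ∑ i, Nmul i)
    (hprof : 0 < ∑ i, ((Nmul i : ℝ) / (Nhat : ℝ)) * t i)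
    (TWR : ℝ → ℝ)
    (hTWR : ∀ f, TWR f = ∏ i, (1 + f * t i / that) ^ (Nmul i)) :
    ∃ fopt ∈ Set.Ioo (0 : ℝ) 1,
      (∀ f ∈ Set.Icc (0 : ℝ) 1, TWR f ≤ TWR fopt) ∧
      (∀ f ∈ Set.Icc (0 : ℝ) 1, (∀ g ∈ Set.Icc (0 : ℝ) 1, TWR g ≤ TWR f) → f = fopt) := by
  haveI : NeZero N := ⟨by omega⟩
  set c : Fin N → ℝ := fun i => t i / that with hc
  have hc0 : ∀ i, c i ≠ 0 := fun i => div_ne_zero (ht i) hthat_pos.ne'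
  have hcm1 : ∀ i, -1 ≤ c i := by
    intro i
    rcases lt_or_gt_of_ne (ht i) with h | h
    · have : |t i| ≤ that := hthat.2 ⟨i, h, rfl⟩
      have : -that ≤ t i := by rw [abs_of_neg h] at this; linarith
      rw [hc, le_div_iff₀ hthat_pos]
      linarith
    · have : (0:ℝ) < c i := div_pos h hthat_pos
      linarith
  set F : ℝ → ℝ := fun f => ∏ i, (1 + f * c i) ^ (Nmul i) with hF
  have hTF : TWR = F := by
    funext f
    rw [hTWR, hF]
    exact Finset.prod_congr rfl fun i _ => by rw [hc, mul_div_assoc]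
  -- positivity of factors on [0,1)
  have hfac : ∀ f ∈ Set.Ico (0:ℝ) 1, ∀ i, 0 < 1 + f * c i := by
    intro f hf i
    rcases le_or_gt 0 (c i) with h | h
    · nlinarith [hf.1]
    · have : f * (-1) ≤ f * c i := mul_le_mul_of_nonneg_left (hcm1 i) hf.1
      have := hf.2
      nlinarith
  have hFpos : ∀ f ∈ Set.Ico (0:ℝ) 1, 0 < F f :=
    fun f hf => Finset.prod_pos fun i _ => pow_pos (hfac f hf i) _
  have hF0 : F 0 = 1 := by simp [hF]
  -- F 1 = 0
  have hF1 : F 1 = 0 := by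
    obtain ⟨i, hti, hte⟩ := hthat.1
    have hci : c i = -1 := by
      rw [hc]
      rw [abs_of_neg hti] at hte
      field_simp
      linarith
    have : (1 + 1 * c i) ^ Nmul i = 0 := by
      rw [hci]; norm_num
      exact Nat.one_le_iff_ne_zero.mp (hNmul i)
    exact Finset.prod_eq_zero (Finset.mem_univ i) this
  -- continuity
  have hcont : Continuous F := by
    apply continuous_finset_prod
    intro i _
    exact (continuous_const.add (continuous_id.mul continuous_const)).pow _
  -- existence of maximizer
  obtain ⟨f₀, hf₀m, hf₀max⟩ := isCompact_Icc.exists_isMaxOn (Set.nonempty_Icc.2 zero_le_one)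
    hcont.continuousOn (s := Set.Icc (0:ℝ) 1)
  have hmax : ∀ f ∈ Set.Icc (0:ℝ) 1, F f ≤ F f₀ := fun f hf => hf₀max hf
  -- derivative at 0 is positive
  have hD : HasDerivAt F (∑ i, (∏ j ∈ Finset.univ.erase i, (1 + (0:ℝ) * c j) ^ Nmul j) •
      ((Nmul i : ℝ) * (1 + (0:ℝ) * c i) ^ (Nmul i - 1) * c i)) 0 := by
    apply HasDerivAt.fun_finsetProd
    intro i _
    have h := (((hasDerivAt_id (0:ℝ)).mul_const (c i)).const_add 1).fun_pow (Nmul i)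
    simpa using h
  have hDval : HasDerivAt F (∑ i, (Nmul i : ℝ) * c i) 0 := by
    convert hD using 1
    refine Finset.sum_congr rfl fun i _ => ?_
    simp
  have hDpos : 0 < ∑ i, (Nmul i : ℝ) * c i := by
    have hNhatpos : 0 < (Nhat : ℝ) := by
      have : 1 ≤ Nhat := by
        rw [hNhat]
        calc 1 ≤ Nmul ⟨0, by omega⟩ := hNmul _
          _ ≤ ∑ i, Nmul i := Finset.single_le_sum (f := Nmul) (fun _ _ => Nat.zero_le _)
              (Finset.mem_univ _)
      exact_mod_cast this
    have h1 : ∑ i, ((Nmul i : ℝ) / (Nhat : ℝ)) * t i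
        = (∑ i, (Nmul i : ℝ) * t i) / (Nhat : ℝ) := by
      rw [Finset.sum_div]
      exact Finset.sum_congr rfl fun i _ => by ring
    rw [h1] at hprof
    have h2 : 0 < ∑ i, (Nmul i : ℝ) * t i := by
      by_contra h
      push_neg at h
      have := div_nonpos_of_nonpos_of_nonneg h hNhatpos.le
      linarith
    have h3 : ∑ i, (Nmul i : ℝ) * c i = (∑ i, (Nmul i : ℝ) * t i) / that := by
      rw [Finset.sum_div]
      exact Finset.sum_congr rfl fun i _ => by rw [hc]; ring
    rw [h3]
    exact div_pos h2 hthat_pos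
  -- find f₁ ∈ (0,1) with F f₁ > 1
  have hslope : Filter.Tendsto (slope F 0) (nhdsWithin 0 {(0:ℝ)}ᶜ)
      (nhds (∑ i, (Nmul i : ℝ) * c i)) := hasDerivAt_iff_tendsto_slope.1 hDval
  have hev1 : ∀ᶠ x in nhdsWithin (0:ℝ) (Set.Ioi 0), 0 < slope F 0 x := by
    have := hslope.eventually (eventually_gt_nhds hDpos)
    exact this.filter_mono (nhdsWithin_mono 0 (fun x hx => (Set.mem_Ioi.1 hx).ne' :
      Set.Ioi (0:ℝ) ⊆ {(0:ℝ)}ᶜ))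
  have hev2 : ∀ᶠ x in nhdsWithin (0:ℝ) (Set.Ioi 0), x ∈ Set.Ioo (0:ℝ) 1 :=
    Ioo_mem_nhdsGT_of_mem ⟨le_refl 0, one_pos⟩
  obtain ⟨f₁, hs1, hf₁⟩ := (hev1.and hev2).exists
  have hFf₁ : 1 < F f₁ := by
    rw [slope_def_field, hF0] at hs1
    have h := mul_pos hs1 (sub_pos.2 hf₁.1)
    rw [div_mul_cancel₀] at h
    · linarith
    · simpa using hf₁.1.ne'
  have hMgt1 : 1 < F f₀ := lt_of_lt_of_le hFf₁ (hmax f₁ ⟨hf₁.1.le, hf₁.2.le⟩)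
  -- f₀ ∈ Ioo 0 1
  have hf₀ne1 : f₀ ≠ 1 := by
    intro h; rw [h, hF1] at hMgt1; linarith
  have hf₀Ico : f₀ ∈ Set.Ico (0:ℝ) 1 := ⟨hf₀m.1, lt_of_le_of_ne hf₀m.2 hf₀ne1⟩
  have hf₀ne0 : f₀ ≠ 0 := by
    intro h; rw [h, hF0] at hMgt1; linarith
  -- uniqueness helper: any maximizer equals f₀
  have huniq : ∀ f ∈ Set.Icc (0:ℝ) 1, (∀ g ∈ Set.Icc (0:ℝ) 1, F g ≤ F f) → f = f₀ := by
    intro f hf hfmax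
    by_contra hne
    have hMeq : F f = F f₀ := le_antisymm (hmax f hf) (hfmax f₀ hf₀m)
    have hfne1 : f ≠ 1 := by
      intro h
      rw [h, hF1] at hMeq
      linarith
    have hfIco : f ∈ Set.Ico (0:ℝ) 1 := ⟨hf.1, lt_of_le_of_ne hf.2 hfne1⟩
    set m := (f + f₀) / 2 with hm
    have hmIco : m ∈ Set.Ico (0:ℝ) 1 := by
      constructor
      · rw [hm]; linarith [hfIco.1, hf₀Ico.1]
      · rw [hm]; linarith [hfIco.2, hf₀Ico.2]
    have key : F f * F f₀ < F m * F m := by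
      have : (∏ i, ((1 + f * c i) ^ Nmul i * (1 + f₀ * c i) ^ Nmul i)) <
          ∏ i, ((1 + m * c i) ^ Nmul i * (1 + m * c i) ^ Nmul i) := by
        apply Finset.prod_lt_prod_of_nonempty
        · intro i _
          exact mul_pos (pow_pos (hfac f hfIco i) _) (pow_pos (hfac f₀ hf₀Ico i) _)
        · intro i _
          rw [← mul_pow, ← mul_pow]
          apply pow_lt_pow_left₀ _ (mul_nonneg (hfac f hfIco i).le (hfac f₀ hf₀Ico i).le)
            (Nat.one_le_iff_ne_zero.mp (hNmul i))
          · have hne' : f * c i ≠ f₀ * c i := fun h =>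
              hne (mul_right_cancel₀ (hc0 i) h)
            have hmid : 1 + m * c i = ((1 + f * c i) + (1 + f₀ * c i)) / 2 := by
              rw [hm]; ring
            have hsq : 0 < (f * c i - f₀ * c i) ^ 2 :=
              sq_pos_of_ne_zero (sub_ne_zero.2 hne')
            have hq : (1 + m * c i) * (1 + m * c i)
                - (1 + f * c i) * (1 + f₀ * c i) = (f * c i - f₀ * c i) ^ 2 / 4 := by
              rw [hmid]; ring
            nlinarith [hsq, hq]
        · exact Finset.univ_nonempty
      rw [Finset.prod_mul_distrib, Finset.prod_mul_distrib] at this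
      exact this
    have hle : F m ≤ F f₀ := hmax m ⟨hmIco.1, hmIco.2.le⟩
    have hFmpos : 0 < F m := hFpos m hmIco
    nlinarith
  refine ⟨f₀, ⟨lt_of_le_of_ne hf₀Ico.1 (Ne.symm hf₀ne0), hf₀Ico.2⟩, ?_, ?_⟩
  · rw [hTF]; exact hmax
  · rw [hTF]; exact huniq
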